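/- Let X be a real m×m positive semidefinite matrix with rank(X) ≤ m₁ ≤ m. Then X ⪯ I_m if and only if for every m×m₁ matrix B with Bᵀ B = I_{m₁}, one has Bᵀ X B ⪯ I_{m₁}. -/

import Mathlib

open Matrix

theorem stmt_4 (m m₁ : ℕ) (hm : m₁ ≤ m) (X : Matrix (Fin m) (Fin m) ℝ)
    (hX : X.PosSemidef) (hrank : X.rank ≤ m₁) :
    ((1 : Matrix (Fin m) (Fin m) ℝ) - X).PosSemidef ↔
    ∀ B : Matrix (Fin m) (Fin m₁) ℝ, Bᵀ * B = 1 →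
      ((1 : Matrix (Fin m₁) (Fin m₁) ℝ) - Bᵀ * X * B).PosSemidef := by
  constructor
  · intro h B hB
    have h2 := h.conjTranspose_mul_mul_same B
    have e : Bᴴ * (1 - X) * B = 1 - Bᵀ * X * B := by
      rw [show Bᴴ = Bᵀ from rfl, Matrix.mul_sub, Matrix.sub_mul, Matrix.mul_one, hB,
        Matrix.mul_assoc]
    rwa [e] at h2
  · intro h
    rcases Nat.eq_zero_or_pos m₁ with h0 | hm₁
    · -- rank X = 0 so X = 0
      subst h0
      have hr0 : X.rank = 0 := Nat.le_zero.mp hrank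
      have hX0 : X = 0 := by
        rw [Matrix.rank] at hr0
        rw [Submodule.finrank_eq_zero, LinearMap.range_eq_bot] at hr0
        ext i j
        have := congrFun (LinearMap.congr_fun hr0 (Pi.single j 1)) i
        simpa [Matrix.mulVec_single] using this
      rw [hX0, sub_zero]
      exact Matrix.PosSemidef.one
    · have hm0 : 0 < m := lt_of_lt_of_le hm₁ hm
      refine Matrix.posSemidef_iff_dotProduct_mulVec.mpr ⟨?_, ?_⟩
      · exact Matrix.isHermitian_one.sub hX.1
      intro x
      by_cases hx : x = 0
      · simp [hx]
      -- build a unit vector and an orthonormal basis starting with it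
      set v : EuclideanSpace ℝ (Fin m) := WithLp.toLp 2 x with hv
      have hv0 : v ≠ 0 := by simpa [hv] using hx
      set u : EuclideanSpace ℝ (Fin m) := ‖v‖⁻¹ • v with hudef
      have hu : ‖u‖ = 1 := norm_smul_inv_norm hv0
      have hortho : Orthonormal ℝ
          (({(⟨0, hm0⟩ : Fin m)} : Set (Fin m)).restrict (fun _ => u)) := by
        constructor
        · intro i
          exact hu
        · intro i j hij
          exact absurd (Subtype.ext (i.2.trans j.2.symm)) hij
      obtain ⟨b, hb⟩ := hortho.exists_orthonormalBasis_extension_of_card_eq (by simp)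
      have hb0 : b ⟨0, hm0⟩ = u := hb _ rfl
      set B : Matrix (Fin m) (Fin m₁) ℝ := fun i j => b (Fin.castLE hm j) i with hBdef
      have hBB : Bᵀ * B = 1 := by
        ext j k
        have h1 := orthonormal_iff_ite.mp b.orthonormal (Fin.castLE hm j) (Fin.castLE hm k)
        rw [PiLp.inner_apply] at h1
        simp only [RCLike.inner_apply, starRingEnd_apply, star_trivial] at h1
        rw [Matrix.mul_apply]
        simp only [Matrix.transpose_apply]
        simp only [Matrix.transpose_apply, Matrix.one_apply, hBdef]
        simp only [mul_comm ((b (Fin.castLE hm k)).ofLp _)] at h1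
        rw [h1]
        congr 1
        simp [Fin.castLE, Fin.ext_iff]
      have hPSD := h B hBB
      have key := hPSD.dotProduct_mulVec_nonneg (Pi.single (⟨0, hm₁⟩ : Fin m₁) 1)
      have hval : star (Pi.single (⟨0, hm₁⟩ : Fin m₁) (1:ℝ)) ⬝ᵥ
          ((1 - Bᵀ * X * B) *ᵥ Pi.single (⟨0, hm₁⟩ : Fin m₁) 1)
          = 1 - (Bᵀ * X * B) ⟨0, hm₁⟩ ⟨0, hm₁⟩ := by
        simp [Matrix.mulVec_single, dotProduct, Pi.single_apply, Matrix.sub_apply,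
          Matrix.one_apply]
      rw [hval] at key
      -- now express the entry
      have hcol : ∀ i : Fin m, B i ⟨0, hm₁⟩ = ‖v‖⁻¹ * x i := by
        intro i
        simp only [hBdef]
        have : Fin.castLE hm (⟨0, hm₁⟩ : Fin m₁) = (⟨0, hm0⟩ : Fin m) := rfl
        rw [this, hb0, hudef]
        simp [hv]
      have hentry : (Bᵀ * X * B) ⟨0, hm₁⟩ ⟨0, hm₁⟩
          = ‖v‖⁻¹ * ‖v‖⁻¹ * (x ⬝ᵥ (X *ᵥ x)) := by
        simp only [Matrix.mul_apply, Matrix.transpose_apply, Matrix.mulVec, dotProduct,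
          Finset.sum_mul, Finset.mul_sum]
        rw [Finset.sum_comm]
        refine Finset.sum_congr rfl fun i _ => Finset.sum_congr rfl fun k _ => ?_
        rw [hcol i, hcol k]; ring
      rw [hentry] at key
      have hnorm : ‖v‖ * ‖v‖ = x ⬝ᵥ x := by
        rw [← real_inner_self_eq_norm_mul_norm]
        rw [hv, PiLp.inner_apply]
        simp [RCLike.inner_apply, dotProduct, mul_comm, sq]
      have hvpos : 0 < ‖v‖ := norm_pos_iff.mpr hv0
      have hXx : x ⬝ᵥ (X *ᵥ x) ≤ x ⬝ᵥ x := by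
        have h1 : ‖v‖⁻¹ * ‖v‖⁻¹ * (x ⬝ᵥ (X *ᵥ x)) ≤ 1 := by linarith
        calc x ⬝ᵥ (X *ᵥ x) = (‖v‖ * ‖v‖) * (‖v‖⁻¹ * ‖v‖⁻¹ * (x ⬝ᵥ (X *ᵥ x))) := by
              field_simp
          _ ≤ (‖v‖ * ‖v‖) * 1 := by
              apply mul_le_mul_of_nonneg_left h1 (by positivity)
          _ = x ⬝ᵥ x := by rw [mul_one, hnorm]
      have : star x ⬝ᵥ ((1 - X) *ᵥ x) = x ⬝ᵥ x - x ⬝ᵥ (X *ᵥ x) := by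
        simp [Matrix.sub_mulVec, dotProduct_sub]
      rw [this]
      linarith
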